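/- For all m ≥ 1, the 2-adic valuation of A_{1,m} equals ν₂(m(m+1)) + 1, where A_{1,m} = (1! · m! / 2^(m-1)) · Σ_{k=1}^{m} 2^k · C(2m-2k, m-k) · C(m+k, m) · k. -/

import Mathlib

open Finset

/-- The rational expression `A_{l,m} = (l! m! / 2^(m-l)) Σ_{k=l}^m 2^k C(2m-2k,m-k) C(m+k,m) C(k,l)`. -/
def Aq (l m : ℕ) : ℚ :=
  ((l.factorial * m.factorial : ℕ) : ℚ) / 2 ^ (m - l) *
    ∑ k ∈ Finset.Icc l m,
      (2 : ℚ) ^ k * ((2 * m - 2 * k).choose (m - k)) * ((m + k).choose m) * (k.choose l)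

namespace NuAOne

/-- binary digit sum -/
def s (n : ℕ) : ℕ := (Nat.digits 2 n).sum
/-- 2-adic valuation of n! -/
def L (n : ℕ) : ℕ := padicValNat 2 (n.factorial)

lemma hA (n : ℕ) : L n + s n = n := by
  have h := sub_one_mul_padicValNat_factorial (p := 2) n
  have h2 := Nat.digit_sum_le 2 n
  simp only [L, s]
  omega

lemma hB (a b : ℕ) : padicValNat 2 ((a + b).choose b) + L b + L a = L (a + b) := by
  have h := Nat.add_choose_mul_factorial_mul_factorial a b
  have hne : ((a + b).choose b) ≠ 0 := (Nat.choose_pos (Nat.le_add_left b a)).ne'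
  have := congrArg (padicValNat 2) h
  rw [padicValNat.mul (Nat.mul_ne_zero hne (Nat.factorial_ne_zero a)) (Nat.factorial_ne_zero b),
    padicValNat.mul hne (Nat.factorial_ne_zero a)] at this
  simp only [L]
  omega

lemma hs2 (n : ℕ) : s (2 * n) = s n := by
  rcases Nat.eq_zero_or_pos n with rfl | hn
  · simp [s]
  · have : Nat.digits 2 (2 * n) = (2 * n) % 2 :: Nat.digits 2 (2 * n / 2) :=
      Nat.digits_def' (by norm_num) (by omega)
    simp only [s, this, Nat.mul_mod_right, Nat.mul_div_cancel_left _ (by norm_num : 0 < 2)]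
    simp

lemma hs21 (n : ℕ) : s (2 * n + 1) = s n + 1 := by
  have : Nat.digits 2 (2 * n + 1) = (2 * n + 1) % 2 :: Nat.digits 2 ((2 * n + 1) / 2) :=
    Nat.digits_def' (by norm_num) (by omega)
  have h1 : (2 * n + 1) % 2 = 1 := by omega
  have h2 : (2 * n + 1) / 2 = n := by omega
  simp only [s, this, h1, h2, List.sum_cons]
  omega

lemma Vodd {n : ℕ} (h : n % 2 = 1) : padicValNat 2 n = 0 :=
  padicValNat.eq_zero_of_not_dvd (by omega)

lemma Veven {n : ℕ} (h : n % 2 = 0) (hn : n ≠ 0) : 1 ≤ padicValNat 2 n := by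
  rw [← padicValNat_dvd_iff_le hn, pow_one]
  omega

lemma hD : ∀ n : ℕ, s (n + 1) + padicValNat 2 (n + 1) = s n + 1 := by
  intro n
  induction n using Nat.strong_induction_on with
  | _ n ih =>
    rcases Nat.even_or_odd n with ⟨j, hj⟩ | ⟨j, hj⟩
    · -- n = 2j, n+1 odd
      subst hj
      have h1 : s (j + j + 1) = s j + 1 := by rw [show j + j + 1 = 2 * j + 1 by ring, hs21]
      have h2 : s (j + j) = s j := by rw [show j + j = 2 * j by ring, hs2]
      have h3 : padicValNat 2 (j + j + 1) = 0 := Vodd (by omega)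
      omega
    · -- n = 2j+1, n+1 = 2(j+1)
      subst hj
      have h1 : s (2 * j + 1 + 1) = s (j + 1) := by
        rw [show 2 * j + 1 + 1 = 2 * (j + 1) by ring, hs2]
      have h2 : s (2 * j + 1) = s j + 1 := hs21 j
      have h3 : padicValNat 2 (2 * j + 1 + 1) = padicValNat 2 (j + 1) + 1 := by
        rw [show 2 * j + 1 + 1 = 2 * (j + 1) by ring,
          padicValNat.mul (by norm_num) (by omega), padicValNat_self]
        omega
      have h4 := ih j (by omega)
      omega

lemma hCB (n : ℕ) : padicValNat 2 ((2 * n).choose n) = s n := by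
  have h1 := hB n n
  have h2 := hA n
  have h3 := hA (n + n)
  have h4 : s (n + n) = s n := by rw [show n + n = 2 * n by ring, hs2]
  rw [show (2 : ℕ) * n = n + n by ring]
  omega

lemma hLsucc (n : ℕ) : L (n + 1) = padicValNat 2 (n + 1) + L n := by
  simp only [L, Nat.factorial_succ]
  rw [padicValNat.mul (by omega) (Nat.factorial_ne_zero n)]


lemma hs1 : s 1 = 1 := by simp [s]

lemma hF : ∀ k : ℕ, 1 ≤ k → s k + padicValNat 2 k ≤ Nat.log 2 k + 1 := by
  intro k
  induction k using Nat.strong_induction_on with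
  | _ k ih =>
    intro hk
    rcases eq_or_lt_of_le hk with h1 | h1
    · rw [← h1]; simp [hs1]
    · rcases Nat.even_or_odd k with ⟨j, hj⟩ | ⟨j, hj⟩
      · have hj1 : 1 ≤ j := by omega
        have e1 : s k = s j := by rw [hj, show j + j = 2 * j by ring, hs2]
        have e2 : padicValNat 2 k = padicValNat 2 j + 1 := by
          rw [hj, show j + j = 2 * j by ring,
            padicValNat.mul (by norm_num) (by omega), padicValNat_self]; omega
        have e3 : Nat.log 2 k = Nat.log 2 j + 1 := by
          rw [hj, show j + j = j * 2 by ring, Nat.log_mul_base (by norm_num) (by omega)]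
        have := ih j (by omega) hj1
        omega
      · have hj1 : 1 ≤ j := by omega
        have e1 : s k = s j + 1 := by rw [hj, hs21]
        have e2 : padicValNat 2 k = 0 := Vodd (by omega)
        have e3 : Nat.log 2 j + 1 ≤ Nat.log 2 k := by
          have : Nat.log 2 (j * 2) ≤ Nat.log 2 k :=
            Nat.log_mono_right (by omega)
          rwa [Nat.log_mul_base (by norm_num) (by omega)] at this
        have := ih j (by omega) hj1
        omega

lemma hlog : ∀ k : ℕ, 3 ≤ k → Nat.log 2 k + 2 ≤ k := by
  intro k hk
  have h2 : k < 2 ^ (k - 1) := by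
    induction k, hk using Nat.le_induction with
    | base => norm_num
    | succ n hn ihn =>
      have h3 : 2 ^ (n - 1) * 2 = 2 ^ (n + 1 - 1) := by
        rw [← pow_succ]; congr 1; omega
      have h4 : 4 ≤ 2 ^ (n - 1) := by
        calc (4:ℕ) = 2 ^ 2 := by norm_num
        _ ≤ 2 ^ (n - 1) := Nat.pow_le_pow_right (by norm_num) (by omega)
      omega
  have := Nat.log_lt_of_lt_pow (by omega : k ≠ 0) h2
  omega

lemma hE (m k : ℕ) (h2 : 2 ≤ k) (hkm : k ≤ m) :
    padicValNat 2 m + padicValNat 2 (m + 1) + 1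
      ≤ k + padicValNat 2 k + padicValNat 2 ((m + k).choose (2 * k)) := by
  rcases eq_or_lt_of_le h2 with hk2 | hk3
  · -- k = 2
    subst hk2
    obtain ⟨a, rfl⟩ : ∃ a, m = a + 2 := ⟨m - 2, by omega⟩
    have f1 : padicValNat 2 ((a + 4).choose 4) + L 4 + L a = L (a + 4) := by
      have h4 : a + 4 = a + 2 + 2 := by omega
      have := hB a 4
      exact this
    have g1 : L (a + 4) = padicValNat 2 (a + 4) + L (a + 3) := by
      have := hLsucc (a + 3); rwa [show a + 3 + 1 = a + 4 by omega] at this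
    have g2 : L (a + 3) = padicValNat 2 (a + 3) + L (a + 2) := by
      have := hLsucc (a + 2); rwa [show a + 2 + 1 = a + 3 by omega] at this
    have g3 : L (a + 2) = padicValNat 2 (a + 2) + L (a + 1) := by
      have := hLsucc (a + 1); rwa [show a + 1 + 1 = a + 2 by omega] at this
    have g4 : L (a + 1) = padicValNat 2 (a + 1) + L a := hLsucc a
    have hL4 : L 4 = 3 := by
      show padicValNat 2 (Nat.factorial 4) = 3
      rw [show Nat.factorial 4 = 2 ^ 3 * 3 by decide,
        padicValNat.mul (by norm_num) (by norm_num), padicValNat.prime_pow,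
        Vodd (by norm_num)]
    have key : 1 ≤ padicValNat 2 (a + 4) + padicValNat 2 (a + 1) := by
      rcases Nat.even_or_odd a with ⟨j, hj⟩ | ⟨j, hj⟩
      · have : 1 ≤ padicValNat 2 (a + 4) := Veven (by omega) (by omega)
        omega
      · have : 1 ≤ padicValNat 2 (a + 1) := Veven (by omega) (by omega)
        omega
    have v2' : padicValNat 2 2 = 1 := padicValNat_self
    have goal_eq : (a + 2 + 2).choose (2 * 2) = (a + 4).choose 4 := by
      congr 1
    rw [goal_eq, show a + 2 + 1 = a + 3 by omega]
    -- f1 gives VC in terms of L's; g's decompose L(a+4) down to L a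
    omega
  · -- k ≥ 3
    obtain ⟨a, rfl⟩ : ∃ a, m = a + k := ⟨m - k, by omega⟩
    have f1 : padicValNat 2 ((a + 2 * k).choose (2 * k)) + L (2 * k) + L a = L (a + 2 * k) :=
      hB a (2 * k)
    have f2 : padicValNat 2 ((a + k + 1 + (k - 1)).choose (k - 1)) + L (k - 1) + L (a + k + 1)
        = L (a + k + 1 + (k - 1)) := hB (a + k + 1) (k - 1)
    have f5 : padicValNat 2 ((a + (k - 1)).choose (k - 1)) + L (k - 1) + L a
        = L (a + (k - 1)) := hB a (k - 1)
    have f3 : L (a + k + 1) = padicValNat 2 (a + k + 1) + L (a + k) := hLsucc (a + k)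
    have f4 : L (a + k) = padicValNat 2 (a + k) + L (a + k - 1) := by
      have := hLsucc (a + k - 1)
      rw [show a + k - 1 + 1 = a + k by omega] at this
      exact this
    have e1 : a + k + 1 + (k - 1) = a + 2 * k := by omega
    have e2 : a + (k - 1) = a + k - 1 := by omega
    rw [e1] at f2
    rw [e2] at f5
    -- L(2k) = 2 L k + s k
    have f6 : padicValNat 2 ((k + k).choose k) + L k + L k = L (k + k) := hB k k
    have f7 : padicValNat 2 ((2 * k).choose k) = s k := hCB k
    have e3 : k + k = 2 * k := by ring
    rw [e3] at f6
    have f8 : L k = padicValNat 2 k + L (k - 1) := by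
      have := hLsucc (k - 1)
      rw [show k - 1 + 1 = k by omega] at this
      exact this
    have f9 := hA k
    have f10 := hF k (by omega)
    have f11 := hlog k (by omega)
    have goal_eq : (a + k + k).choose (2 * k) = (a + 2 * k).choose (2 * k) := by
      congr 1; omega
    rw [goal_eq]
    omega


lemma hstep (m k : ℕ) (h2 : 2 ≤ k) (hkm : k ≤ m) :
    s (m - 1) + padicValNat 2 (m + 1) + 2
      ≤ k + s (m - k) + padicValNat 2 ((m + k).choose m) + padicValNat 2 k := by
  obtain ⟨a, rfl⟩ : ∃ a, m = a + k := ⟨m - k, by omega⟩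
  have hE' := hE (a + k) k h2 hkm
  have hsymm : (a + k + k).choose (a + k) = (a + k + k).choose k := by
    have := Nat.choose_symm (show k ≤ a + k + k by omega)
    rwa [show a + k + k - k = a + k by omega] at this
  have hBm : padicValNat 2 ((a + k + k).choose k) + L k + L (a + k) = L (a + k + k) :=
    hB (a + k) k
  have hB2 : padicValNat 2 ((a + 2 * k).choose (2 * k)) + L (2 * k) + L a = L (a + 2 * k) :=
    hB a (2 * k)
  rw [show a + 2 * k = a + k + k by ring] at hB2
  have hmk : s (a + k - k) = s a := by rw [show a + k - k = a by omega]
  have hD1 : s (a + k) + padicValNat 2 (a + k) = s (a + k - 1) + 1 := by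
    have := hD (a + k - 1); rwa [show a + k - 1 + 1 = a + k by omega] at this
  have hAa := hA a
  have hAk := hA k
  have hAak := hA (a + k)
  have f6 : L (2 * k) = L k + L k + s k := by
    have h1 := hB k k
    have h2 := hCB k
    rw [show k + k = 2 * k by ring] at h1
    omega
  rw [hsymm, hmk]
  omega

end NuAOne

open NuAOne in
theorem nu_A_one (m : ℕ) (hm : 1 ≤ m) :
    padicValRat 2 (Aq 1 m) = (padicValNat 2 (m * (m + 1)) : ℤ) + 1 := by
  classical
  set f : ℕ → ℕ :=
    fun k => m.factorial * (2 ^ k * ((2 * m - 2 * k).choose (m - k)) * ((m + k).choose m) * k)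
    with hf
  have hfpos : ∀ k, 1 ≤ k → k ≤ m → 0 < f k := by
    intro k h1 hk
    have c1pos : 0 < (2 * m - 2 * k).choose (m - k) := Nat.choose_pos (by omega)
    have c2pos : 0 < (m + k).choose m := Nat.choose_pos (by omega)
    have := m.factorial_pos
    simp only [hf]
    positivity
  have hVU : ∀ k, 1 ≤ k → k ≤ m →
      padicValNat 2 (f k) = L m + k + s (m - k)
        + padicValNat 2 ((m + k).choose m) + padicValNat 2 k := by
    intro k h1 hk
    have e : 2 * m - 2 * k = 2 * (m - k) := by omega
    have c1pos : 0 < (2 * (m - k)).choose (m - k) := Nat.choose_pos (by omega)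
    have c2pos : 0 < (m + k).choose m := Nat.choose_pos (by omega)
    have h2k : (0:ℕ) < 2 ^ k := by positivity
    simp only [hf, e]
    rw [padicValNat.mul (Nat.factorial_ne_zero m)
        (by positivity),
      padicValNat.mul (by positivity) (by omega),
      padicValNat.mul (by positivity) c2pos.ne',
      padicValNat.mul (by positivity) c1pos.ne',
      padicValNat.prime_pow, hCB]
    have hLm : padicValNat 2 m.factorial = L m := rfl
    omega
  have hv1 : padicValNat 2 (f 1)
      = m + padicValNat 2 m + padicValNat 2 (m + 1) := by
    have h := hVU 1 le_rfl hm
    rw [Nat.choose_succ_self_right m] at h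
    have hAm := hA m
    have hD1 : s m + padicValNat 2 m = s (m - 1) + 1 := by
      have := hD (m - 1); rwa [show m - 1 + 1 = m by omega] at this
    have hone : padicValNat 2 1 = 0 := by simp
    rw [h, hone]
    omega
  set v := m + padicValNat 2 m + padicValNat 2 (m + 1) with hvdef
  have hR : (2:ℕ) ^ (v + 1) ∣ ∑ k ∈ Finset.Icc 2 m, f k := by
    apply Finset.dvd_sum
    intro k hk
    simp only [Finset.mem_Icc] at hk
    have hge : v + 1 ≤ padicValNat 2 (f k) := by
      rw [hVU k (by omega) hk.2]
      have hst := hstep m k hk.1 hk.2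
      have hAm := hA m
      have hD1 : s m + padicValNat 2 m = s (m - 1) + 1 := by
        have := hD (m - 1); rwa [show m - 1 + 1 = m by omega] at this
      omega
    exact dvd_trans (pow_dvd_pow 2 hge) pow_padicValNat_dvd
  set N : ℕ := ∑ k ∈ Finset.Icc 1 m, f k with hNdef
  have hsplit : Finset.Icc 1 m = insert 1 (Finset.Icc 2 m) := by
    ext x
    simp only [Finset.mem_Icc, Finset.mem_insert]
    omega
  have hN : N = f 1 + ∑ k ∈ Finset.Icc 2 m, f k := by
    rw [hNdef, hsplit, Finset.sum_insert (by simp)]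
  have hf1pos := hfpos 1 le_rfl hm
  have hNpos : 0 < N := by omega
  have hvN : padicValNat 2 N = v := by
    have hdf1 : (2:ℕ) ^ v ∣ f 1 := by
      have := pow_padicValNat_dvd (p := 2) (n := f 1)
      rwa [hv1] at this
    have hdvd : (2:ℕ) ^ v ∣ N := by
      rw [hN]
      exact dvd_add hdf1 (dvd_trans (pow_dvd_pow 2 (Nat.le_succ v)) hR)
    have hnot : ¬ (2:ℕ) ^ (v + 1) ∣ N := by
      intro hcon
      have hsub : f 1 = N - ∑ k ∈ Finset.Icc 2 m, f k := by omega
      have hd1 : (2:ℕ) ^ (v + 1) ∣ f 1 := by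
        rw [hsub]; exact Nat.dvd_sub hcon hR
      have := pow_succ_padicValNat_not_dvd (p := 2) hf1pos.ne'
      rw [hv1] at this
      exact this hd1
    have h1 := (padicValNat_dvd_iff_le hNpos.ne').mp hdvd
    by_contra hne
    exact hnot ((padicValNat_dvd_iff_le hNpos.ne').mpr (by omega))
  have hAq : Aq 1 m = (N : ℚ) / 2 ^ (m - 1) := by
    unfold Aq
    rw [Nat.factorial_one, one_mul, div_mul_eq_mul_div]
    congr 1
    rw [Finset.mul_sum, hNdef]
    push_cast
    apply Finset.sum_congr rfl
    intro k hk
    simp only [hf, Nat.choose_one_right]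
    push_cast
    ring
  rw [hAq, padicValRat.div (by exact_mod_cast hNpos.ne') (by positivity),
    padicValRat.of_nat, hvN]
  have h2pow : padicValRat 2 ((2:ℚ) ^ (m - 1)) = ((m - 1 : ℕ) : ℤ) := by
    rw [show ((2:ℚ) ^ (m - 1)) = ((2 ^ (m - 1) : ℕ) : ℚ) by push_cast; ring,
      padicValRat.of_nat, padicValNat.prime_pow]
  rw [h2pow]
  have hmul : padicValNat 2 (m * (m + 1))
      = padicValNat 2 m + padicValNat 2 (m + 1) :=
    padicValNat.mul (by omega) (by omega)
  rw [hmul, hvdef]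
  omega
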